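/- Let Ω ⊆ ℝ² be open with coordinates (x,u) and let F : Ω → ℝ be smooth with ∂_x∂_u F(x₀,u₀) ≠ 0 at a point (x₀,u₀) ∈ Ω. Define J[F] at a point as (F_{uuxx} + F_x·F_{uux} − 2·F_u·F_{uxx} − 2·F_u·F_x·F_{ux})/F_{ux}², where subscripts denote partial derivatives. Let α, β : ℝ → ℝ be smooth near x₀ and u₀ respectively with α'(x₀) ≠ 0 and β'(u₀) ≠ 0, and let C₁ ∈ ℝ satisfy C₁·β'(u)/α'(x)² > 0 for all (x,u) near (x₀,u₀). Suppose F̃ is a smooth function on a neighborhood of (α(x₀), β(u₀)) such that F̃(α(x), β(u)) = F(x,u) − ½·ln(C₁·β'(u)/α'(x)²) for all (x,u) near (x₀,u₀). Then J[F̃](α(x₀), β(u₀)) = J[F](x₀, u₀). -/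

import Mathlib

/-- Partial derivative in the `x`-direction (first coordinate). -/
noncomputable def pdX (f : ℝ × ℝ → ℝ) (p : ℝ × ℝ) : ℝ := fderiv ℝ f p (1, 0)

/-- Partial derivative in the `u`-direction (second coordinate). -/
noncomputable def pdU (f : ℝ × ℝ → ℝ) (p : ℝ × ℝ) : ℝ := fderiv ℝ f p (0, 1)

/-- `J[F] = (F_{uuxx} + F_xF_{uux} − 2F_uF_{uxx} − 2F_uF_xF_{ux})/F_{ux}²`. -/
noncomputable def inv10 (F : ℝ × ℝ → ℝ) (p : ℝ × ℝ) : ℝ :=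
  (pdX (pdX (pdU (pdU F))) p + pdX F p * pdX (pdU (pdU F)) p
      - 2 * pdU F p * pdX (pdX (pdU F)) p
      - 2 * pdU F p * pdX F p * pdX (pdU F) p) /
    (pdX (pdU F) p) ^ 2

open Filter Topology

lemma pdX_congr {f g : ℝ × ℝ → ℝ} {p : ℝ × ℝ} (h : f =ᶠ[𝓝 p] g) : pdX f p = pdX g p := by
  unfold pdX; rw [h.fderiv_eq]

lemma pdU_congr {f g : ℝ × ℝ → ℝ} {p : ℝ × ℝ} (h : f =ᶠ[𝓝 p] g) : pdU f p = pdU g p := by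
  unfold pdU; rw [h.fderiv_eq]

lemma contDiffAt_pdX {n m : WithTop ℕ∞} {f : ℝ × ℝ → ℝ} {p : ℝ × ℝ}
    (h : ContDiffAt ℝ n f p) (hmn : m + 1 ≤ n) : ContDiffAt ℝ m (pdX f) p := by
  have h1 : ContDiffAt ℝ m (fderiv ℝ f) p := h.fderiv_right hmn
  exact (ContinuousLinearMap.apply ℝ ℝ ((1:ℝ), (0:ℝ))).contDiff.contDiffAt.comp p h1

lemma contDiffAt_pdU {n m : WithTop ℕ∞} {f : ℝ × ℝ → ℝ} {p : ℝ × ℝ}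
    (h : ContDiffAt ℝ n f p) (hmn : m + 1 ≤ n) : ContDiffAt ℝ m (pdU f) p := by
  have h1 : ContDiffAt ℝ m (fderiv ℝ f) p := h.fderiv_right hmn
  exact (ContinuousLinearMap.apply ℝ ℝ ((0:ℝ), (1:ℝ))).contDiff.contDiffAt.comp p h1

lemma contDiffAt_deriv1 {n m : WithTop ℕ∞} {f : ℝ → ℝ} {x : ℝ}
    (h : ContDiffAt ℝ n f x) (hmn : m + 1 ≤ n) : ContDiffAt ℝ m (deriv f) x := by
  have h1 : ContDiffAt ℝ m (fderiv ℝ f) x := h.fderiv_right hmn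
  exact (ContinuousLinearMap.apply ℝ ℝ (1:ℝ)).contDiff.contDiffAt.comp x h1

lemma pdX_mul {f g : ℝ × ℝ → ℝ} {q : ℝ × ℝ} (hf : DifferentiableAt ℝ f q)
    (hg : DifferentiableAt ℝ g q) :
    pdX (fun r => f r * g r) q = pdX f q * g q + f q * pdX g q := by
  unfold pdX; rw [fderiv_fun_mul hf hg]; simp; ring

lemma pdU_mul {f g : ℝ × ℝ → ℝ} {q : ℝ × ℝ} (hf : DifferentiableAt ℝ f q)
    (hg : DifferentiableAt ℝ g q) :
    pdU (fun r => f r * g r) q = pdU f q * g q + f q * pdU g q := by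
  unfold pdU; rw [fderiv_fun_mul hf hg]; simp; ring

lemma pdX_add {f g : ℝ × ℝ → ℝ} {q : ℝ × ℝ} (hf : DifferentiableAt ℝ f q)
    (hg : DifferentiableAt ℝ g q) :
    pdX (fun r => f r + g r) q = pdX f q + pdX g q := by
  unfold pdX; rw [fderiv_fun_add hf hg]; simp

lemma pdU_add {f g : ℝ × ℝ → ℝ} {q : ℝ × ℝ} (hf : DifferentiableAt ℝ f q)
    (hg : DifferentiableAt ℝ g q) :
    pdU (fun r => f r + g r) q = pdU f q + pdU g q := by
  unfold pdU; rw [fderiv_fun_add hf hg]; simp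

lemma pdX_sub {f g : ℝ × ℝ → ℝ} {q : ℝ × ℝ} (hf : DifferentiableAt ℝ f q)
    (hg : DifferentiableAt ℝ g q) :
    pdX (fun r => f r - g r) q = pdX f q - pdX g q := by
  unfold pdX; rw [fderiv_fun_sub hf hg]; simp

lemma pdU_sub {f g : ℝ × ℝ → ℝ} {q : ℝ × ℝ} (hf : DifferentiableAt ℝ f q)
    (hg : DifferentiableAt ℝ g q) :
    pdU (fun r => f r - g r) q = pdU f q - pdU g q := by
  unfold pdU; rw [fderiv_fun_sub hf hg]; simp

lemma pdX_snd_comp {h : ℝ → ℝ} {q : ℝ × ℝ} (hh : DifferentiableAt ℝ h q.2) :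
    pdX (fun r => h r.2) q = 0 := by
  have H : HasFDerivAt (fun r : ℝ × ℝ => h r.2)
      ((ContinuousLinearMap.smulRight (1 : ℝ →L[ℝ] ℝ) (deriv h q.2)).comp
        (ContinuousLinearMap.snd ℝ ℝ ℝ)) q :=
    (hh.hasDerivAt.hasFDerivAt).comp q hasFDerivAt_snd
  unfold pdX; rw [H.fderiv]; simp

lemma pdU_snd_comp {h : ℝ → ℝ} {q : ℝ × ℝ} (hh : DifferentiableAt ℝ h q.2) :
    pdU (fun r => h r.2) q = deriv h q.2 := by
  have H : HasFDerivAt (fun r : ℝ × ℝ => h r.2)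
      ((ContinuousLinearMap.smulRight (1 : ℝ →L[ℝ] ℝ) (deriv h q.2)).comp
        (ContinuousLinearMap.snd ℝ ℝ ℝ)) q :=
    (hh.hasDerivAt.hasFDerivAt).comp q hasFDerivAt_snd
  unfold pdU; rw [H.fderiv]; simp

lemma pdX_fst_comp {h : ℝ → ℝ} {q : ℝ × ℝ} (hh : DifferentiableAt ℝ h q.1) :
    pdX (fun r => h r.1) q = deriv h q.1 := by
  have H : HasFDerivAt (fun r : ℝ × ℝ => h r.1)
      ((ContinuousLinearMap.smulRight (1 : ℝ →L[ℝ] ℝ) (deriv h q.1)).comp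
        (ContinuousLinearMap.fst ℝ ℝ ℝ)) q :=
    (hh.hasDerivAt.hasFDerivAt).comp q hasFDerivAt_fst
  unfold pdX; rw [H.fderiv]; simp

lemma pdU_fst_comp {h : ℝ → ℝ} {q : ℝ × ℝ} (hh : DifferentiableAt ℝ h q.1) :
    pdU (fun r => h r.1) q = 0 := by
  have H : HasFDerivAt (fun r : ℝ × ℝ => h r.1)
      ((ContinuousLinearMap.smulRight (1 : ℝ →L[ℝ] ℝ) (deriv h q.1)).comp
        (ContinuousLinearMap.fst ℝ ℝ ℝ)) q :=
    (hh.hasDerivAt.hasFDerivAt).comp q hasFDerivAt_fst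
  unfold pdU; rw [H.fderiv]; simp

section comp2
variable {f : ℝ × ℝ → ℝ} {α β : ℝ → ℝ} {q : ℝ × ℝ}

lemma hasFDerivAt_phi (ha : DifferentiableAt ℝ α q.1) (hb : DifferentiableAt ℝ β q.2) :
    HasFDerivAt (fun r : ℝ × ℝ => (α r.1, β r.2))
      (((ContinuousLinearMap.smulRight (1 : ℝ →L[ℝ] ℝ) (deriv α q.1)).comp
          (ContinuousLinearMap.fst ℝ ℝ ℝ)).prod
        ((ContinuousLinearMap.smulRight (1 : ℝ →L[ℝ] ℝ) (deriv β q.2)).comp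
          (ContinuousLinearMap.snd ℝ ℝ ℝ))) q :=
  HasFDerivAt.prodMk ((ha.hasDerivAt.hasFDerivAt).comp q hasFDerivAt_fst)
    ((hb.hasDerivAt.hasFDerivAt).comp q hasFDerivAt_snd)

lemma pdX_comp2 (hf : DifferentiableAt ℝ f (α q.1, β q.2))
    (ha : DifferentiableAt ℝ α q.1) (hb : DifferentiableAt ℝ β q.2) :
    pdX (fun r => f (α r.1, β r.2)) q = deriv α q.1 * pdX f (α q.1, β q.2) := by
  have H : HasFDerivAt (fun r : ℝ × ℝ => f (α r.1, β r.2)) _ q :=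
    hf.hasFDerivAt.comp q (hasFDerivAt_phi ha hb)
  unfold pdX
  rw [H.fderiv]
  have h1 : ((((ContinuousLinearMap.smulRight (1 : ℝ →L[ℝ] ℝ) (deriv α q.1)).comp
          (ContinuousLinearMap.fst ℝ ℝ ℝ)).prod
        ((ContinuousLinearMap.smulRight (1 : ℝ →L[ℝ] ℝ) (deriv β q.2)).comp
          (ContinuousLinearMap.snd ℝ ℝ ℝ))) ((1:ℝ),(0:ℝ)))
      = deriv α q.1 • ((1:ℝ),(0:ℝ)) := by
    simp [Prod.ext_iff]
  rw [ContinuousLinearMap.comp_apply, h1, map_smul]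
  simp

lemma pdU_comp2 (hf : DifferentiableAt ℝ f (α q.1, β q.2))
    (ha : DifferentiableAt ℝ α q.1) (hb : DifferentiableAt ℝ β q.2) :
    pdU (fun r => f (α r.1, β r.2)) q = deriv β q.2 * pdU f (α q.1, β q.2) := by
  have H : HasFDerivAt (fun r : ℝ × ℝ => f (α r.1, β r.2)) _ q :=
    hf.hasFDerivAt.comp q (hasFDerivAt_phi ha hb)
  unfold pdU
  rw [H.fderiv]
  have h1 : ((((ContinuousLinearMap.smulRight (1 : ℝ →L[ℝ] ℝ) (deriv α q.1)).comp
          (ContinuousLinearMap.fst ℝ ℝ ℝ)).prod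
        ((ContinuousLinearMap.smulRight (1 : ℝ →L[ℝ] ℝ) (deriv β q.2)).comp
          (ContinuousLinearMap.snd ℝ ℝ ℝ))) ((0:ℝ),(1:ℝ)))
      = deriv β q.2 • ((0:ℝ),(1:ℝ)) := by
    simp [Prod.ext_iff]
  rw [ContinuousLinearMap.comp_apply, h1, map_smul]
  simp

lemma diffAt_comp2 (hf : DifferentiableAt ℝ f (α q.1, β q.2))
    (ha : DifferentiableAt ℝ α q.1) (hb : DifferentiableAt ℝ β q.2) :
    DifferentiableAt ℝ (fun r : ℝ × ℝ => f (α r.1, β r.2)) q :=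
  (hf.hasFDerivAt.comp q (hasFDerivAt_phi ha hb)).differentiableAt

end comp2

lemma diffAt_snd_comp {h : ℝ → ℝ} {q : ℝ × ℝ} (hh : DifferentiableAt ℝ h q.2) :
    DifferentiableAt ℝ (fun r : ℝ × ℝ => h r.2) q :=
  hh.comp q differentiable_snd.differentiableAt

lemma diffAt_fst_comp {h : ℝ → ℝ} {q : ℝ × ℝ} (hh : DifferentiableAt ℝ h q.1) :
    DifferentiableAt ℝ (fun r : ℝ × ℝ => h r.1) q :=
  hh.comp q differentiable_fst.differentiableAt

open scoped ContDiff

lemma le_inf6 : (6 : WithTop ℕ∞) ≤ ((⊤ : ℕ∞) : WithTop ℕ∞) := by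
  calc (6 : WithTop ℕ∞) = ((6:ℕ∞) : WithTop ℕ∞) := by norm_cast
  _ ≤ _ := WithTop.coe_le_coe.mpr le_top

lemma le_inf8 : (8 : WithTop ℕ∞) ≤ ((⊤ : ℕ∞) : WithTop ℕ∞) := by
  calc (8 : WithTop ℕ∞) = ((8:ℕ∞) : WithTop ℕ∞) := by norm_cast
  _ ≤ _ := WithTop.coe_le_coe.mpr le_top

lemma ne_inf6 : (6 : WithTop ℕ∞) ≠ ((⊤ : ℕ∞) : WithTop ℕ∞) := by
  intro h
  have h2 : ((6:ℕ∞) : WithTop ℕ∞) = ((⊤ : ℕ∞) : WithTop ℕ∞) := by rw [← h]; norm_cast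
  exact (by norm_num : (6:ℕ∞) ≠ ⊤) (WithTop.coe_injective h2)

lemma ne_inf8 : (8 : WithTop ℕ∞) ≠ ((⊤ : ℕ∞) : WithTop ℕ∞) := by
  intro h
  have h2 : ((8:ℕ∞) : WithTop ℕ∞) = ((⊤ : ℕ∞) : WithTop ℕ∞) := by rw [← h]; norm_cast
  exact (by norm_num : (8:ℕ∞) ≠ ⊤) (WithTop.coe_injective h2)

noncomputable def Pfun (C₁ : ℝ) (β : ℝ → ℝ) : ℝ → ℝ := fun u => (1/2) * Real.log (C₁ * deriv β u)
noncomputable def Qfun (α : ℝ → ℝ) : ℝ → ℝ := fun x => (1/2) * Real.log ((deriv α x)^2)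
noncomputable def gfun (Ft : ℝ × ℝ → ℝ) (α β : ℝ → ℝ) : ℝ × ℝ → ℝ :=
  fun r => Ft (α r.1, β r.2)

/-- Invariance of `J` under the Lie pseudogroup action
`(x, u, F) ↦ (α(x), β(u), F∘(α⁻¹,β⁻¹) − ½ ln(C₁β'/α'²))`. -/
theorem stmt_10 (Ω : Set (ℝ × ℝ)) (hΩ : IsOpen Ω) (x₀ u₀ : ℝ) (hmem : (x₀, u₀) ∈ Ω)
    (F : ℝ × ℝ → ℝ) (hF : ContDiffOn ℝ (⊤ : ℕ∞) F Ω)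
    (hFxu : pdX (pdU F) (x₀, u₀) ≠ 0)
    (α β : ℝ → ℝ) (hα : ContDiffAt ℝ (⊤ : ℕ∞) α x₀) (hβ : ContDiffAt ℝ (⊤ : ℕ∞) β u₀)
    (hα' : deriv α x₀ ≠ 0) (hβ' : deriv β u₀ ≠ 0)
    (C₁ : ℝ)
    (hpos : ∀ᶠ p : ℝ × ℝ in nhds (x₀, u₀), 0 < C₁ * deriv β p.2 / (deriv α p.1) ^ 2)
    (Ft : ℝ × ℝ → ℝ) (hFt : ContDiffAt ℝ (⊤ : ℕ∞) Ft (α x₀, β u₀))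
    (hrel : ∀ᶠ p : ℝ × ℝ in nhds (x₀, u₀),
      Ft (α p.1, β p.2) = F p - (1 / 2) * Real.log (C₁ * deriv β p.2 / (deriv α p.1) ^ 2)) :
    inv10 Ft (α x₀, β u₀) = inv10 F (x₀, u₀) := by
  have hposn : 0 < C₁ * deriv β u₀ / (deriv α x₀)^2 := hpos.self_of_nhds
  have hC1b : 0 < C₁ * deriv β u₀ := by
    have h2 : (0:ℝ) < (deriv α x₀)^2 := by positivity
    have h3 := mul_pos hposn h2
    rwa [div_mul_cancel₀ _ h2.ne'] at h3
  have hC1 : C₁ ≠ 0 := by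
    intro h; rw [h, zero_mul] at hC1b; exact lt_irrefl 0 hC1b
  -- eventual smoothness facts
  have htfst : Filter.Tendsto (Prod.fst : ℝ × ℝ → ℝ) (𝓝 (x₀, u₀)) (𝓝 x₀) := continuousAt_fst
  have htsnd : Filter.Tendsto (Prod.snd : ℝ × ℝ → ℝ) (𝓝 (x₀, u₀)) (𝓝 u₀) := continuousAt_snd
  have hEF : ∀ᶠ q : ℝ × ℝ in 𝓝 (x₀, u₀), ContDiffAt ℝ 6 F q := by
    filter_upwards [hΩ.mem_nhds hmem] with q hq
    exact (hF.contDiffAt (hΩ.mem_nhds hq)).of_le le_inf6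
  have hEα : ∀ᶠ q : ℝ × ℝ in 𝓝 (x₀, u₀), ContDiffAt ℝ 8 α q.1 :=
    htfst.eventually ((hα.of_le le_inf8).eventually ne_inf8)
  have hEβ : ∀ᶠ q : ℝ × ℝ in 𝓝 (x₀, u₀), ContDiffAt ℝ 8 β q.2 :=
    htsnd.eventually ((hβ.of_le le_inf8).eventually ne_inf8)
  have hEa : ∀ᶠ q : ℝ × ℝ in 𝓝 (x₀, u₀), deriv α q.1 ≠ 0 :=
    htfst.eventually
      (((contDiffAt_deriv1 (hα.of_le le_inf8) (by norm_num) :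
          ContDiffAt ℝ 7 (deriv α) x₀).continuousAt).eventually_ne hα')
  have hEb : ∀ᶠ q : ℝ × ℝ in 𝓝 (x₀, u₀), C₁ * deriv β q.2 ≠ 0 := by
    filter_upwards [hpos, hEa] with q h1 h2
    have h3 : (0:ℝ) < (deriv α q.1)^2 := by positivity
    have h4 := mul_pos h1 h3
    rw [div_mul_cancel₀ _ h3.ne'] at h4
    exact h4.ne'
  have hφc : Filter.Tendsto (fun q : ℝ × ℝ => (α q.1, β q.2)) (𝓝 (x₀, u₀)) (𝓝 (α x₀, β u₀)) :=
    (hα.continuousAt.comp continuousAt_fst).prodMk (hβ.continuousAt.comp continuousAt_snd)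
  have hEFt : ∀ᶠ q : ℝ × ℝ in 𝓝 (x₀, u₀), ContDiffAt ℝ 6 Ft (α q.1, β q.2) :=
    hφc.eventually ((hFt.of_le le_inf6).eventually ne_inf6)
  have hEP : ∀ᶠ q : ℝ × ℝ in 𝓝 (x₀, u₀), ContDiffAt ℝ 4 (Pfun C₁ β) q.2 := by
    filter_upwards [hEβ, hEb] with q h1 h2
    exact contDiffAt_const.mul ((Real.contDiffAt_log.mpr h2).comp q.2
      (contDiffAt_const.mul (contDiffAt_deriv1 h1 (by norm_num))))
  have hEQ : ∀ᶠ q : ℝ × ℝ in 𝓝 (x₀, u₀), ContDiffAt ℝ 4 (Qfun α) q.1 := by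
    filter_upwards [hEα, hEa] with q h1 h2
    exact contDiffAt_const.mul ((Real.contDiffAt_log.mpr (pow_ne_zero 2 h2)).comp q.1
      ((contDiffAt_deriv1 h1 (by norm_num)).pow 2))
  have hgFPQ : ∀ᶠ q : ℝ × ℝ in 𝓝 (x₀, u₀),
      gfun Ft α β q = F q - Pfun C₁ β q.2 + Qfun α q.1 := by
    filter_upwards [hrel, hEb, hEa] with q h1 h2 h3
    show Ft (α q.1, β q.2) = _
    rw [h1, Real.log_div h2 (pow_ne_zero 2 h3)]
    show _ = F q - (1/2) * Real.log (C₁ * deriv β q.2) + (1/2) * Real.log ((deriv α q.1)^2)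
    ring
  -- chain rule side
  have S1 : ∀ᶠ q : ℝ × ℝ in 𝓝 (x₀, u₀),
      pdX (gfun Ft α β) q = deriv α q.1 * pdX Ft (α q.1, β q.2) := by
    filter_upwards [hEFt, hEα, hEβ] with q h1 h2 h3
    exact pdX_comp2 (h1.differentiableAt (by norm_num)) (h2.differentiableAt (by norm_num))
      (h3.differentiableAt (by norm_num))
  have S2 : ∀ᶠ q : ℝ × ℝ in 𝓝 (x₀, u₀),
      pdU (gfun Ft α β) q = deriv β q.2 * pdU Ft (α q.1, β q.2) := by
    filter_upwards [hEFt, hEα, hEβ] with q h1 h2 h3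
    exact pdU_comp2 (h1.differentiableAt (by norm_num)) (h2.differentiableAt (by norm_num))
      (h3.differentiableAt (by norm_num))
  have S3 : ∀ᶠ q : ℝ × ℝ in 𝓝 (x₀, u₀),
      pdX (pdU (gfun Ft α β)) q
        = deriv β q.2 * (deriv α q.1 * pdX (pdU Ft) (α q.1, β q.2)) := by
    filter_upwards [S2.eventually_nhds, hEFt, hEα, hEβ] with q h0 h1 h2 h3
    have dα : DifferentiableAt ℝ α q.1 := h2.differentiableAt (by norm_num)
    have dβ : DifferentiableAt ℝ β q.2 := h3.differentiableAt (by norm_num)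
    have dB : DifferentiableAt ℝ (deriv β) q.2 :=
      (contDiffAt_deriv1 h3 (by norm_num) : ContDiffAt ℝ 7 (deriv β) q.2).differentiableAt
        (by norm_num)
    have hT2 : ContDiffAt ℝ 5 (pdU Ft) (α q.1, β q.2) := contDiffAt_pdU h1 (by norm_num)
    have dT2 : DifferentiableAt ℝ (pdU Ft) (α q.1, β q.2) := hT2.differentiableAt (by norm_num)
    rw [pdX_congr h0, pdX_mul (diffAt_snd_comp dB) (diffAt_comp2 dT2 dα dβ),
      pdX_snd_comp dB, pdX_comp2 dT2 dα dβ]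
    ring
  have S4 : ∀ᶠ q : ℝ × ℝ in 𝓝 (x₀, u₀),
      pdX (pdX (pdU (gfun Ft α β))) q
        = deriv β q.2 * (deriv (deriv α) q.1 * pdX (pdU Ft) (α q.1, β q.2)
            + deriv α q.1 * (deriv α q.1 * pdX (pdX (pdU Ft)) (α q.1, β q.2))) := by
    filter_upwards [S3.eventually_nhds, hEFt, hEα, hEβ] with q h0 h1 h2 h3
    have dα : DifferentiableAt ℝ α q.1 := h2.differentiableAt (by norm_num)
    have dβ : DifferentiableAt ℝ β q.2 := h3.differentiableAt (by norm_num)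
    have dA : DifferentiableAt ℝ (deriv α) q.1 :=
      (contDiffAt_deriv1 h2 (by norm_num) : ContDiffAt ℝ 7 (deriv α) q.1).differentiableAt
        (by norm_num)
    have dB : DifferentiableAt ℝ (deriv β) q.2 :=
      (contDiffAt_deriv1 h3 (by norm_num) : ContDiffAt ℝ 7 (deriv β) q.2).differentiableAt
        (by norm_num)
    have hT2' : ContDiffAt ℝ 5 (pdU Ft) (α q.1, β q.2) := contDiffAt_pdU h1 (by norm_num)
    have hT3 : ContDiffAt ℝ 4 (pdX (pdU Ft)) (α q.1, β q.2) :=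
      contDiffAt_pdX hT2' (by norm_num)
    have dT3 : DifferentiableAt ℝ (pdX (pdU Ft)) (α q.1, β q.2) :=
      hT3.differentiableAt (by norm_num)
    rw [pdX_congr h0,
      pdX_mul (diffAt_snd_comp dB) ((diffAt_fst_comp dA).fun_mul (diffAt_comp2 dT3 dα dβ)),
      pdX_snd_comp dB, pdX_mul (diffAt_fst_comp dA) (diffAt_comp2 dT3 dα dβ),
      pdX_fst_comp dA, pdX_comp2 dT3 dα dβ]
    ring
  have S5 : ∀ᶠ q : ℝ × ℝ in 𝓝 (x₀, u₀),
      pdU (pdU (gfun Ft α β)) q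
        = deriv (deriv β) q.2 * pdU Ft (α q.1, β q.2)
            + deriv β q.2 * (deriv β q.2 * pdU (pdU Ft) (α q.1, β q.2)) := by
    filter_upwards [S2.eventually_nhds, hEFt, hEα, hEβ] with q h0 h1 h2 h3
    have dα : DifferentiableAt ℝ α q.1 := h2.differentiableAt (by norm_num)
    have dβ : DifferentiableAt ℝ β q.2 := h3.differentiableAt (by norm_num)
    have dB : DifferentiableAt ℝ (deriv β) q.2 :=
      (contDiffAt_deriv1 h3 (by norm_num) : ContDiffAt ℝ 7 (deriv β) q.2).differentiableAt
        (by norm_num)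
    have hT2 : ContDiffAt ℝ 5 (pdU Ft) (α q.1, β q.2) := contDiffAt_pdU h1 (by norm_num)
    have dT2 : DifferentiableAt ℝ (pdU Ft) (α q.1, β q.2) := hT2.differentiableAt (by norm_num)
    rw [pdU_congr h0, pdU_mul (diffAt_snd_comp dB) (diffAt_comp2 dT2 dα dβ),
      pdU_snd_comp dB, pdU_comp2 dT2 dα dβ]
  have S6 : ∀ᶠ q : ℝ × ℝ in 𝓝 (x₀, u₀),
      pdX (pdU (pdU (gfun Ft α β))) q
        = deriv (deriv β) q.2 * (deriv α q.1 * pdX (pdU Ft) (α q.1, β q.2))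
            + deriv β q.2 * (deriv β q.2
                * (deriv α q.1 * pdX (pdU (pdU Ft)) (α q.1, β q.2))) := by
    filter_upwards [S5.eventually_nhds, hEFt, hEα, hEβ] with q h0 h1 h2 h3
    have dα : DifferentiableAt ℝ α q.1 := h2.differentiableAt (by norm_num)
    have dβ : DifferentiableAt ℝ β q.2 := h3.differentiableAt (by norm_num)
    have dB : DifferentiableAt ℝ (deriv β) q.2 :=
      (contDiffAt_deriv1 h3 (by norm_num) : ContDiffAt ℝ 7 (deriv β) q.2).differentiableAt
        (by norm_num)
    have hB7 : ContDiffAt ℝ 7 (deriv β) q.2 := contDiffAt_deriv1 h3 (by norm_num)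
    have dB2 : DifferentiableAt ℝ (deriv (deriv β)) q.2 :=
      (contDiffAt_deriv1 hB7 (by norm_num) :
        ContDiffAt ℝ 6 (deriv (deriv β)) q.2).differentiableAt (by norm_num)
    have hT2 : ContDiffAt ℝ 5 (pdU Ft) (α q.1, β q.2) := contDiffAt_pdU h1 (by norm_num)
    have dT2 : DifferentiableAt ℝ (pdU Ft) (α q.1, β q.2) := hT2.differentiableAt (by norm_num)
    have hT2u : ContDiffAt ℝ 4 (pdU (pdU Ft)) (α q.1, β q.2) :=
      contDiffAt_pdU hT2 (by norm_num)
    have dT2u : DifferentiableAt ℝ (pdU (pdU Ft)) (α q.1, β q.2) :=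
      hT2u.differentiableAt (by norm_num)
    rw [pdX_congr h0,
      pdX_add ((diffAt_snd_comp dB2).fun_mul (diffAt_comp2 dT2 dα dβ))
        ((diffAt_snd_comp dB).fun_mul ((diffAt_snd_comp dB).fun_mul (diffAt_comp2 dT2u dα dβ))),
      pdX_mul (diffAt_snd_comp dB2) (diffAt_comp2 dT2 dα dβ),
      pdX_snd_comp dB2, pdX_comp2 dT2 dα dβ,
      pdX_mul (diffAt_snd_comp dB) ((diffAt_snd_comp dB).fun_mul (diffAt_comp2 dT2u dα dβ)),
      pdX_snd_comp dB,
      pdX_mul (diffAt_snd_comp dB) (diffAt_comp2 dT2u dα dβ),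
      pdX_comp2 dT2u dα dβ, pdX_snd_comp dB]
    ring
  have S7 : ∀ᶠ q : ℝ × ℝ in 𝓝 (x₀, u₀),
      pdX (pdX (pdU (pdU (gfun Ft α β)))) q
        = deriv (deriv β) q.2 * (deriv (deriv α) q.1 * pdX (pdU Ft) (α q.1, β q.2)
              + deriv α q.1 * (deriv α q.1 * pdX (pdX (pdU Ft)) (α q.1, β q.2)))
            + deriv β q.2 * (deriv β q.2
                * (deriv (deriv α) q.1 * pdX (pdU (pdU Ft)) (α q.1, β q.2)
                    + deriv α q.1 * (deriv α q.1
                        * pdX (pdX (pdU (pdU Ft))) (α q.1, β q.2)))) := by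
    filter_upwards [S6.eventually_nhds, hEFt, hEα, hEβ] with q h0 h1 h2 h3
    have dα : DifferentiableAt ℝ α q.1 := h2.differentiableAt (by norm_num)
    have dβ : DifferentiableAt ℝ β q.2 := h3.differentiableAt (by norm_num)
    have dA : DifferentiableAt ℝ (deriv α) q.1 :=
      (contDiffAt_deriv1 h2 (by norm_num) : ContDiffAt ℝ 7 (deriv α) q.1).differentiableAt
        (by norm_num)
    have dB : DifferentiableAt ℝ (deriv β) q.2 :=
      (contDiffAt_deriv1 h3 (by norm_num) : ContDiffAt ℝ 7 (deriv β) q.2).differentiableAt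
        (by norm_num)
    have hB7 : ContDiffAt ℝ 7 (deriv β) q.2 := contDiffAt_deriv1 h3 (by norm_num)
    have dB2 : DifferentiableAt ℝ (deriv (deriv β)) q.2 :=
      (contDiffAt_deriv1 hB7 (by norm_num) :
        ContDiffAt ℝ 6 (deriv (deriv β)) q.2).differentiableAt (by norm_num)
    have hT2' : ContDiffAt ℝ 5 (pdU Ft) (α q.1, β q.2) := contDiffAt_pdU h1 (by norm_num)
    have hT3 : ContDiffAt ℝ 4 (pdX (pdU Ft)) (α q.1, β q.2) :=
      contDiffAt_pdX hT2' (by norm_num)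
    have dT3 : DifferentiableAt ℝ (pdX (pdU Ft)) (α q.1, β q.2) :=
      hT3.differentiableAt (by norm_num)
    have hT2u' : ContDiffAt ℝ 4 (pdU (pdU Ft)) (α q.1, β q.2) :=
      contDiffAt_pdU hT2' (by norm_num)
    have hT5 : ContDiffAt ℝ 3 (pdX (pdU (pdU Ft))) (α q.1, β q.2) :=
      contDiffAt_pdX hT2u' (by norm_num)
    have dT5 : DifferentiableAt ℝ (pdX (pdU (pdU Ft))) (α q.1, β q.2) :=
      hT5.differentiableAt (by norm_num)
    rw [pdX_congr h0,
      pdX_add ((diffAt_snd_comp dB2).fun_mul ((diffAt_fst_comp dA).fun_mul (diffAt_comp2 dT3 dα dβ)))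
        ((diffAt_snd_comp dB).fun_mul ((diffAt_snd_comp dB).fun_mul
          ((diffAt_fst_comp dA).fun_mul (diffAt_comp2 dT5 dα dβ)))),
      pdX_mul (diffAt_snd_comp dB2) ((diffAt_fst_comp dA).fun_mul (diffAt_comp2 dT3 dα dβ)),
      pdX_snd_comp dB2,
      pdX_mul (diffAt_fst_comp dA) (diffAt_comp2 dT3 dα dβ),
      pdX_fst_comp dA, pdX_comp2 dT3 dα dβ,
      pdX_mul (diffAt_snd_comp dB) ((diffAt_snd_comp dB).fun_mul
        ((diffAt_fst_comp dA).fun_mul (diffAt_comp2 dT5 dα dβ))),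
      pdX_snd_comp dB,
      pdX_mul (diffAt_snd_comp dB) ((diffAt_fst_comp dA).fun_mul (diffAt_comp2 dT5 dα dβ)),
      pdX_mul (diffAt_fst_comp dA) (diffAt_comp2 dT5 dα dβ),
      pdX_comp2 dT5 dα dβ, pdX_snd_comp dB, pdX_fst_comp dA]
    ring
  -- relation side
  have U1 : ∀ᶠ q : ℝ × ℝ in 𝓝 (x₀, u₀),
      pdX (gfun Ft α β) q = pdX F q + deriv (Qfun α) q.1 := by
    filter_upwards [hgFPQ.eventually_nhds, hEF, hEP, hEQ] with q h0 h1 hp hq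
    have dF : DifferentiableAt ℝ F q := h1.differentiableAt (by norm_num)
    have dP : DifferentiableAt ℝ (Pfun C₁ β) q.2 := hp.differentiableAt (by norm_num)
    have dQ : DifferentiableAt ℝ (Qfun α) q.1 := hq.differentiableAt (by norm_num)
    rw [pdX_congr h0, pdX_add (dF.fun_sub (diffAt_snd_comp dP)) (diffAt_fst_comp dQ),
      pdX_sub dF (diffAt_snd_comp dP), pdX_snd_comp dP, pdX_fst_comp dQ]
    ring
  have U2 : ∀ᶠ q : ℝ × ℝ in 𝓝 (x₀, u₀),
      pdU (gfun Ft α β) q = pdU F q - deriv (Pfun C₁ β) q.2 := by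
    filter_upwards [hgFPQ.eventually_nhds, hEF, hEP, hEQ] with q h0 h1 hp hq
    have dF : DifferentiableAt ℝ F q := h1.differentiableAt (by norm_num)
    have dP : DifferentiableAt ℝ (Pfun C₁ β) q.2 := hp.differentiableAt (by norm_num)
    have dQ : DifferentiableAt ℝ (Qfun α) q.1 := hq.differentiableAt (by norm_num)
    rw [pdU_congr h0, pdU_add (dF.fun_sub (diffAt_snd_comp dP)) (diffAt_fst_comp dQ),
      pdU_sub dF (diffAt_snd_comp dP), pdU_snd_comp dP, pdU_fst_comp dQ]
    ring
  have U3 : ∀ᶠ q : ℝ × ℝ in 𝓝 (x₀, u₀),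
      pdX (pdU (gfun Ft α β)) q = pdX (pdU F) q := by
    filter_upwards [U2.eventually_nhds, hEF, hEP] with q h0 h1 hp
    have dUF : DifferentiableAt ℝ (pdU F) q :=
      (contDiffAt_pdU h1 (by norm_num) : ContDiffAt ℝ 5 (pdU F) q).differentiableAt (by norm_num)
    have dP1 : DifferentiableAt ℝ (deriv (Pfun C₁ β)) q.2 :=
      (contDiffAt_deriv1 hp (by norm_num) :
        ContDiffAt ℝ 3 (deriv (Pfun C₁ β)) q.2).differentiableAt (by norm_num)
    rw [pdX_congr h0, pdX_sub dUF (diffAt_snd_comp dP1), pdX_snd_comp dP1]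
    ring
  have U4 : ∀ᶠ q : ℝ × ℝ in 𝓝 (x₀, u₀),
      pdX (pdX (pdU (gfun Ft α β))) q = pdX (pdX (pdU F)) q := by
    filter_upwards [U3.eventually_nhds] with q h0
    exact pdX_congr h0
  have U5 : ∀ᶠ q : ℝ × ℝ in 𝓝 (x₀, u₀),
      pdU (pdU (gfun Ft α β)) q = pdU (pdU F) q - deriv (deriv (Pfun C₁ β)) q.2 := by
    filter_upwards [U2.eventually_nhds, hEF, hEP] with q h0 h1 hp
    have dUF : DifferentiableAt ℝ (pdU F) q :=
      (contDiffAt_pdU h1 (by norm_num) : ContDiffAt ℝ 5 (pdU F) q).differentiableAt (by norm_num)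
    have dP1 : DifferentiableAt ℝ (deriv (Pfun C₁ β)) q.2 :=
      (contDiffAt_deriv1 hp (by norm_num) :
        ContDiffAt ℝ 3 (deriv (Pfun C₁ β)) q.2).differentiableAt (by norm_num)
    rw [pdU_congr h0, pdU_sub dUF (diffAt_snd_comp dP1), pdU_snd_comp dP1]
  have U6 : ∀ᶠ q : ℝ × ℝ in 𝓝 (x₀, u₀),
      pdX (pdU (pdU (gfun Ft α β))) q = pdX (pdU (pdU F)) q := by
    filter_upwards [U5.eventually_nhds, hEF, hEP] with q h0 h1 hp
    have hUF5 : ContDiffAt ℝ 5 (pdU F) q := contDiffAt_pdU h1 (by norm_num)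
    have dUUF : DifferentiableAt ℝ (pdU (pdU F)) q :=
      (contDiffAt_pdU hUF5 (by norm_num) :
        ContDiffAt ℝ 4 (pdU (pdU F)) q).differentiableAt (by norm_num)
    have hP3 : ContDiffAt ℝ 3 (deriv (Pfun C₁ β)) q.2 := contDiffAt_deriv1 hp (by norm_num)
    have dP2 : DifferentiableAt ℝ (deriv (deriv (Pfun C₁ β))) q.2 :=
      (contDiffAt_deriv1 hP3 (by norm_num) :
        ContDiffAt ℝ 2 (deriv (deriv (Pfun C₁ β))) q.2).differentiableAt (by norm_num)
    rw [pdX_congr h0, pdX_sub dUUF (diffAt_snd_comp dP2), pdX_snd_comp dP2]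
    ring
  have U7 : ∀ᶠ q : ℝ × ℝ in 𝓝 (x₀, u₀),
      pdX (pdX (pdU (pdU (gfun Ft α β)))) q = pdX (pdX (pdU (pdU F))) q := by
    filter_upwards [U6.eventually_nhds] with q h0
    exact pdX_congr h0
  -- derivative values of P and Q
  have dBu : DifferentiableAt ℝ (deriv β) u₀ :=
    (contDiffAt_deriv1 (hβ.of_le le_inf8) (by norm_num) :
      ContDiffAt ℝ 7 (deriv β) u₀).differentiableAt (by norm_num)
  have dAx : DifferentiableAt ℝ (deriv α) x₀ :=
    (contDiffAt_deriv1 (hα.of_le le_inf8) (by norm_num) :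
      ContDiffAt ℝ 7 (deriv α) x₀).differentiableAt (by norm_num)
  have hP' : deriv (Pfun C₁ β) u₀
      = (1/2) * ((C₁ * deriv (deriv β) u₀) / (C₁ * deriv β u₀)) := by
    have h1 : HasDerivAt (fun u => C₁ * deriv β u) (C₁ * deriv (deriv β) u₀) u₀ :=
      dBu.hasDerivAt.const_mul C₁
    exact ((h1.log hC1b.ne').const_mul (1/2 : ℝ)).deriv
  have hQ' : deriv (Qfun α) x₀
      = (1/2) * ((2 * deriv α x₀ * deriv (deriv α) x₀) / (deriv α x₀)^2) := by
    have h1 : HasDerivAt (fun x => (deriv α x)^2)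
        ((2:ℕ) * deriv α x₀ ^ (2-1) * deriv (deriv α) x₀) x₀ := dAx.hasDerivAt.pow 2
    have h2 := ((h1.log (pow_ne_zero 2 hα')).const_mul (1/2 : ℝ)).deriv
    rw [show Qfun α = fun x => (1/2) * Real.log ((deriv α x)^2) from rfl, h2]
    norm_num
  -- extract values at the base point
  have s1 : pdX (gfun Ft α β) (x₀, u₀) = deriv α x₀ * pdX Ft (α x₀, β u₀) := S1.self_of_nhds
  have s2 : pdU (gfun Ft α β) (x₀, u₀) = deriv β u₀ * pdU Ft (α x₀, β u₀) := S2.self_of_nhds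
  have s3 : pdX (pdU (gfun Ft α β)) (x₀, u₀)
      = deriv β u₀ * (deriv α x₀ * pdX (pdU Ft) (α x₀, β u₀)) := S3.self_of_nhds
  have s4 : pdX (pdX (pdU (gfun Ft α β))) (x₀, u₀)
      = deriv β u₀ * (deriv (deriv α) x₀ * pdX (pdU Ft) (α x₀, β u₀)
          + deriv α x₀ * (deriv α x₀ * pdX (pdX (pdU Ft)) (α x₀, β u₀))) := S4.self_of_nhds
  have s6 : pdX (pdU (pdU (gfun Ft α β))) (x₀, u₀)
      = deriv (deriv β) u₀ * (deriv α x₀ * pdX (pdU Ft) (α x₀, β u₀))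
          + deriv β u₀ * (deriv β u₀
              * (deriv α x₀ * pdX (pdU (pdU Ft)) (α x₀, β u₀))) := S6.self_of_nhds
  have s7 : pdX (pdX (pdU (pdU (gfun Ft α β)))) (x₀, u₀)
      = deriv (deriv β) u₀ * (deriv (deriv α) x₀ * pdX (pdU Ft) (α x₀, β u₀)
            + deriv α x₀ * (deriv α x₀ * pdX (pdX (pdU Ft)) (α x₀, β u₀)))
          + deriv β u₀ * (deriv β u₀
              * (deriv (deriv α) x₀ * pdX (pdU (pdU Ft)) (α x₀, β u₀)
                  + deriv α x₀ * (deriv α x₀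
                      * pdX (pdX (pdU (pdU Ft))) (α x₀, β u₀)))) := S7.self_of_nhds
  have u1 : pdX (gfun Ft α β) (x₀, u₀) = pdX F (x₀, u₀) + deriv (Qfun α) x₀ := U1.self_of_nhds
  have u2 : pdU (gfun Ft α β) (x₀, u₀) = pdU F (x₀, u₀) - deriv (Pfun C₁ β) u₀ :=
    U2.self_of_nhds
  have u3 : pdX (pdU (gfun Ft α β)) (x₀, u₀) = pdX (pdU F) (x₀, u₀) := U3.self_of_nhds
  have u4 : pdX (pdX (pdU (gfun Ft α β))) (x₀, u₀) = pdX (pdX (pdU F)) (x₀, u₀) :=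
    U4.self_of_nhds
  have u6 : pdX (pdU (pdU (gfun Ft α β))) (x₀, u₀) = pdX (pdU (pdU F)) (x₀, u₀) :=
    U6.self_of_nhds
  have u7 : pdX (pdX (pdU (pdU (gfun Ft α β)))) (x₀, u₀) = pdX (pdX (pdU (pdU F))) (x₀, u₀) :=
    U7.self_of_nhds
  -- F-derivative values
  have hFx : pdX F (x₀, u₀) = deriv α x₀ * pdX Ft (α x₀, β u₀)
      - (1/2) * ((2 * deriv α x₀ * deriv (deriv α) x₀) / (deriv α x₀)^2) := by
    rw [← hQ']; linarith [u1, s1]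
  have hFu : pdU F (x₀, u₀) = deriv β u₀ * pdU Ft (α x₀, β u₀)
      + (1/2) * ((C₁ * deriv (deriv β) u₀) / (C₁ * deriv β u₀)) := by
    rw [← hP']; linarith [u2, s2]
  have hFux : pdX (pdU F) (x₀, u₀)
      = deriv β u₀ * (deriv α x₀ * pdX (pdU Ft) (α x₀, β u₀)) := by rw [← u3]; exact s3
  have hFuxx : pdX (pdX (pdU F)) (x₀, u₀)
      = deriv β u₀ * (deriv (deriv α) x₀ * pdX (pdU Ft) (α x₀, β u₀)
          + deriv α x₀ * (deriv α x₀ * pdX (pdX (pdU Ft)) (α x₀, β u₀))) := by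
    rw [← u4]; exact s4
  have hFuux : pdX (pdU (pdU F)) (x₀, u₀)
      = deriv (deriv β) u₀ * (deriv α x₀ * pdX (pdU Ft) (α x₀, β u₀))
          + deriv β u₀ * (deriv β u₀
              * (deriv α x₀ * pdX (pdU (pdU Ft)) (α x₀, β u₀))) := by rw [← u6]; exact s6
  have hFuuxx : pdX (pdX (pdU (pdU F))) (x₀, u₀)
      = deriv (deriv β) u₀ * (deriv (deriv α) x₀ * pdX (pdU Ft) (α x₀, β u₀)
            + deriv α x₀ * (deriv α x₀ * pdX (pdX (pdU Ft)) (α x₀, β u₀)))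
          + deriv β u₀ * (deriv β u₀
              * (deriv (deriv α) x₀ * pdX (pdU (pdU Ft)) (α x₀, β u₀)
                  + deriv α x₀ * (deriv α x₀
                      * pdX (pdX (pdU (pdU Ft))) (α x₀, β u₀)))) := by rw [← u7]; exact s7
  have ht3 : pdX (pdU Ft) (α x₀, β u₀) ≠ 0 := by
    intro h
    apply hFxu
    rw [hFux, h]; ring
  rw [inv10, inv10, hFx, hFu, hFux, hFuxx, hFuux, hFuuxx]
  have hbne : deriv β u₀ ≠ 0 := hβ'
  field_simp
  ring
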